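/- arXiv:1106.0930 — 4 statements merged into one kernel-verified Lean document; each statement's English description precedes it below -/
import Mathlib

section
/- Every class in E_{10}/2E_{10} on which the mod 2 quadratic form takes the value 1 is represented by a root: for every x ∈ E_{10} with ⟨x,x⟩ ≡ 2 (mod 4), there exists α ∈ E_{10} with ⟨α,α⟩ = −2 such that α − x ∈ 2E_{10}. -/
/-- The standard bilinear form on `ℤ^{1,n}`: `⟨x,y⟩ = x₀y₀ - ∑_{i=1}^n xᵢyᵢ`. -/
def B {n : ℕ} (x y : Fin (n + 1) → ℤ) : ℤ :=
  x 0 * y 0 - ∑ i : Fin n, x i.succ * y i.succ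

/-- The vector `k_n = -3e₀ + (e₁ + ⋯ + e_n)`. -/
def kv (n : ℕ) : Fin (n + 1) → ℤ := fun j => if j = 0 then -3 else 1

/-- The lattice `E_n = k_n^⊥` as a submodule of `ℤ^{1,n}`. -/
def En (n : ℕ) : Submodule ℤ (Fin (n + 1) → ℤ) where
  carrier := {x | B x (kv n) = 0}
  zero_mem' := by simp [B]
  add_mem' := by
    intro a b ha hb
    simp only [Set.mem_setOf_eq, B, Pi.add_apply, add_mul] at ha hb ⊢
    rw [Finset.sum_add_distrib]
    linarith
  smul_mem' := by
    intro c x hx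
    simp only [Set.mem_setOf_eq, B, Pi.smul_apply, smul_eq_mul, mul_assoc] at hx ⊢
    rw [← Finset.mul_sum, ← mul_sub, hx, mul_zero]

lemma mem_En_iff (x : Fin 11 → ℤ) :
    x ∈ En 10 ↔ ∑ i : Fin 10, x i.succ = -3 * x 0 := by
  have h : x ∈ En 10 ↔ B x (kv 10) = 0 := Iff.rfl
  rw [h]
  simp only [B, kv, Fin.succ_ne_zero, if_false, mul_one]
  norm_num
  constructor <;> intro h' <;> linarith

lemma build (x : Fin 11 → ℤ) (hx : ∑ i : Fin 10, x i.succ = -3 * x 0)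
    (c : ℤ) (f : Fin 10 → ℤ)
    (hsum : ∑ i : Fin 10, f i = -3 * c)
    (hsq : ∑ i : Fin 10, f i * f i = c * c + 2)
    (hp0 : 2 ∣ c - x 0) (hp : ∀ i : Fin 10, 2 ∣ f i - x i.succ) :
    ∃ α : Fin 11 → ℤ, α ∈ En 10 ∧ B α α = -2 ∧
      ∃ y : Fin 11 → ℤ, y ∈ En 10 ∧ α - x = (2 : ℤ) • y := by
  set α : Fin 11 → ℤ := Fin.cons c f with hαdef
  have hα0 : α 0 = c := rfl
  have hαs : ∀ i : Fin 10, α i.succ = f i := fun i => rfl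
  refine ⟨α, ?_, ?_, ?_⟩
  · rw [mem_En_iff]
    simp only [hαs, hα0, hsum]
  · show α 0 * α 0 - ∑ i : Fin 10, α i.succ * α i.succ = -2
    simp only [hα0, hαs, hsq]
    ring
  · set y : Fin 11 → ℤ := fun j => (α j - x j) / 2 with hydef
    have hdvd : ∀ j, 2 ∣ α j - x j := by
      intro j
      induction j using Fin.cases with
      | zero => simpa [hα0] using hp0
      | succ i => simpa [hαs] using hp i
    have h2y : ∀ j, 2 * y j = α j - x j := fun j => Int.mul_ediv_cancel' (hdvd j)
    refine ⟨y, ?_, ?_⟩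
    · rw [mem_En_iff]
      have e1 : ∑ i : Fin 10, (2 * y i.succ) = 2 * ∑ i : Fin 10, y i.succ :=
        (Finset.mul_sum _ _ _).symm
      have e2 : ∑ i : Fin 10, (2 * y i.succ) = ∑ i : Fin 10, (α i.succ - x i.succ) := by
        refine Finset.sum_congr rfl fun i _ => h2y i.succ
      have e3 : ∑ i : Fin 10, (α i.succ - x i.succ)
          = ∑ i : Fin 10, α i.succ - ∑ i : Fin 10, x i.succ := Finset.sum_sub_distrib _ _
      have e4 : ∑ i : Fin 10, α i.succ = -3 * c := by
        simp only [hαs]; exact hsum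
      have e5 := h2y 0
      rw [hα0] at e5
      have : 2 * (∑ i : Fin 10, y i.succ) = 2 * (-3 * y 0) := by
        rw [← e1, e2, e3, e4, hx]; linarith
      exact mul_left_cancel₀ two_ne_zero this
    · funext j
      have := h2y j
      simp only [Pi.sub_apply, Pi.smul_apply, smul_eq_mul]
      linarith

/-- every class of `E₁₀/2E₁₀` on which the mod-2 quadratic form equals 1
is represented by a root. -/
theorem root_represents_odd_class (x : Fin 11 → ℤ) (hx : x ∈ En 10)
    (h4 : B x x ≡ 2 [ZMOD 4]) :
    ∃ α : Fin 11 → ℤ, α ∈ En 10 ∧ B α α = -2 ∧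
      ∃ y : Fin 11 → ℤ, y ∈ En 10 ∧ α - x = (2 : ℤ) • y := by
  classical
  rw [mem_En_iff] at hx
  set S : Finset (Fin 10) := Finset.univ.filter (fun i => Odd (x i.succ)) with hS
  have hmem : ∀ i, i ∈ S ↔ Odd (x i.succ) := by intro i; simp [hS]
  have hcard_le : S.card ≤ 10 := by simpa using Finset.card_le_univ S
  -- squares mod 4
  have sq4 : ∀ z : ℤ, (4 : ℤ) ∣ (z * z - if Odd z then 1 else 0) := by
    intro z
    rcases Int.even_or_odd z with h | h
    · rw [if_neg (by rw [Int.not_odd_iff_even]; exact h)]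
      obtain ⟨k, hk⟩ := h
      exact ⟨k * k, by rw [hk]; ring⟩
    · rw [if_pos h]
      obtain ⟨k, hk⟩ := h
      exact ⟨k * k + k, by rw [hk]; ring⟩
  have hsum4 : (4 : ℤ) ∣ ((∑ i : Fin 10, x i.succ * x i.succ) - (S.card : ℤ)) := by
    have hb : ((S.card : ℤ)) = ∑ i : Fin 10, (if Odd (x i.succ) then (1 : ℤ) else 0) := by
      rw [Finset.sum_boole]
    rw [hb, ← Finset.sum_sub_distrib]
    exact Finset.dvd_sum fun i _ => sq4 _
  have h4' : (4 : ℤ) ∣ (B x x - 2) := Int.ModEq.dvd h4.symm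
  have hBxx : B x x = x 0 * x 0 - ∑ i : Fin 10, x i.succ * x i.succ := rfl
  set e : ℤ := if Odd (x 0) then 1 else 0 with he
  have key : (4 : ℤ) ∣ (e - (S.card : ℤ) - 2) := by
    have hre : e - (S.card : ℤ) - 2
        = (B x x - 2) - (x 0 * x 0 - e) + ((∑ i : Fin 10, x i.succ * x i.succ) - S.card) := by
      rw [hBxx]; ring
    rw [hre]
    exact dvd_add (dvd_sub h4' (sq4 (x 0))) hsum4
  have he01 : e = 0 ∨ e = 1 := by
    rw [he]
    by_cases h : Odd (x 0)
    · rw [if_pos h]; right; rfl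
    · rw [if_neg h]; left; rfl
  obtain ⟨q, hq⟩ := key
  have hcases : (e = 0 ∧ (S.card = 2 ∨ S.card = 6 ∨ S.card = 10))
      ∨ (e = 1 ∧ (S.card = 3 ∨ S.card = 7)) := by omega
  -- parity helpers
  have hpar : ∀ (g : Fin 10 → ℤ), (∀ i, i ∈ S → Odd (g i)) → (∀ i, i ∉ S → Even (g i)) →
      ∀ i, 2 ∣ g i - x i.succ := by
    intro g hodd heven i
    by_cases hi : i ∈ S
    · obtain ⟨a, ha⟩ := hodd i hi
      obtain ⟨b, hb⟩ := (hmem i).mp hi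
      omega
    · obtain ⟨a, ha⟩ := heven i hi
      have hbx : Even (x i.succ) := by
        rw [← Int.not_odd_iff_even]; exact fun hc => hi ((hmem i).mpr hc)
      obtain ⟨b, hb⟩ := hbx
      omega
  rcases hcases with ⟨he0, hm⟩ | ⟨he1, hm⟩
  · -- x 0 even
    have hx0even : Even (x 0) := by
      rw [← Int.not_odd_iff_even]
      intro hodd
      rw [he, if_pos hodd] at he0
      exact one_ne_zero he0
    obtain ⟨b0, hb0⟩ := hx0even
    rcases hm with hm | hm | hm
    · -- m = 2 : α = e_s - e_t
      have hne : S.Nonempty := Finset.card_pos.mp (by omega)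
      set s := S.min' hne with hsdef
      have hsS : s ∈ S := S.min'_mem hne
      refine build x hx 0 (fun i => if i = s then 1 else if i ∈ S then -1 else 0) ?_ ?_ (by omega) ?_
      · have hpt : ∀ i : Fin 10, (if i = s then (1:ℤ) else if i ∈ S then -1 else 0)
            = (if i ∈ S then (-1:ℤ) else 0) + (if i = s then 2 else 0) := by
          intro i
          by_cases h1 : i = s
          · subst h1; simp [hsS]
          · by_cases h2 : i ∈ S <;> simp [h1, h2]
        rw [Finset.sum_congr rfl fun i _ => hpt i, Finset.sum_add_distrib,
          Finset.sum_ite_mem, Finset.univ_inter, Finset.sum_const, Finset.sum_ite_eq']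
        simp [hm]
      · have hpt : ∀ i : Fin 10,
            (if i = s then (1:ℤ) else if i ∈ S then -1 else 0) *
            (if i = s then (1:ℤ) else if i ∈ S then -1 else 0)
            = (if i ∈ S then (1:ℤ) else 0) := by
          intro i
          by_cases h1 : i = s
          · subst h1; simp [hsS]
          · by_cases h2 : i ∈ S <;> simp [h1, h2]
        rw [Finset.sum_congr rfl fun i _ => hpt i,
          Finset.sum_ite_mem, Finset.univ_inter, Finset.sum_const]
        simp [hm]
      · refine hpar _ ?_ ?_
        · intro i hi
          by_cases h1 : i = s
          · simp [h1]
          · simp [h1, hi]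
        · intro i hi
          have h1 : i ≠ s := fun h => hi (h ▸ hsS)
          simp [h1, hi]
    · -- m = 6 : α = 2e₀ - sum over S
      refine build x hx 2 (fun i => if i ∈ S then -1 else 0) ?_ ?_ (by omega) ?_
      · rw [Finset.sum_ite_mem, Finset.univ_inter, Finset.sum_const]; simp [hm]
      · have hpt : ∀ i : Fin 10, (if i ∈ S then (-1:ℤ) else 0) * (if i ∈ S then (-1:ℤ) else 0)
            = (if i ∈ S then (1:ℤ) else 0) := by
          intro i; by_cases h2 : i ∈ S <;> simp [h2]
        rw [Finset.sum_congr rfl fun i _ => hpt i,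
          Finset.sum_ite_mem, Finset.univ_inter, Finset.sum_const]
        simp [hm]
      · refine hpar _ (fun i hi => by simp [hi]) (fun i hi => by simp [hi])
    · -- m = 10 : α = 4e₀ - 3e_s - rest
      have hSuniv : S = Finset.univ := by apply Finset.eq_univ_of_card; simpa using hm
      set s : Fin 10 := 0 with hsdef
      refine build x hx 4 (fun i => if i = s then -3 else -1) ?_ ?_ (by omega) ?_
      · have hpt : ∀ i : Fin 10, (if i = s then (-3:ℤ) else -1)
            = -1 + (if i = s then (-2:ℤ) else 0) := by
          intro i; by_cases h1 : i = s <;> simp [h1]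
        rw [Finset.sum_congr rfl fun i _ => hpt i, Finset.sum_add_distrib,
          Finset.sum_const, Finset.sum_ite_eq']
        simp
      · have hpt : ∀ i : Fin 10, (if i = s then (-3:ℤ) else -1) * (if i = s then (-3:ℤ) else -1)
            = 1 + (if i = s then (8:ℤ) else 0) := by
          intro i; by_cases h1 : i = s <;> simp [h1]
        rw [Finset.sum_congr rfl fun i _ => hpt i, Finset.sum_add_distrib,
          Finset.sum_const, Finset.sum_ite_eq']
        simp
      · refine hpar _ ?_ ?_
        · intro i _
          by_cases h1 : i = s
          · simp [h1]; decide
          · simp [h1]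
        · intro i hi
          exact absurd (hSuniv ▸ Finset.mem_univ i) hi
  · -- x 0 odd
    have hx0odd : Odd (x 0) := by
      by_contra hodd
      rw [he, if_neg hodd] at he1
      exact one_ne_zero he1.symm
    obtain ⟨b0, hb0⟩ := hx0odd
    rcases hm with hm | hm
    · -- m = 3 : α = e₀ - sum over S
      refine build x hx 1 (fun i => if i ∈ S then -1 else 0) ?_ ?_ (by omega) ?_
      · rw [Finset.sum_ite_mem, Finset.univ_inter, Finset.sum_const]; simp [hm]
      · have hpt : ∀ i : Fin 10, (if i ∈ S then (-1:ℤ) else 0) * (if i ∈ S then (-1:ℤ) else 0)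
            = (if i ∈ S then (1:ℤ) else 0) := by
          intro i; by_cases h2 : i ∈ S <;> simp [h2]
        rw [Finset.sum_congr rfl fun i _ => hpt i,
          Finset.sum_ite_mem, Finset.univ_inter, Finset.sum_const]
        simp [hm]
      · refine hpar _ (fun i hi => by simp [hi]) (fun i hi => by simp [hi])
    · -- m = 7 : α = 3e₀ - 2e_t - sum over S
      have hcc : Sᶜ.card = 3 := by
        rw [Finset.card_compl]; simp [hm]
      have hne : Sᶜ.Nonempty := Finset.card_pos.mp (by omega)
      set t := Sᶜ.min' hne with htdef
      have htS : t ∉ S := by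
        have := Sᶜ.min'_mem hne
        rwa [Finset.mem_compl] at this
      refine build x hx 3 (fun i => if i ∈ S then -1 else if i = t then -2 else 0) ?_ ?_ (by omega) ?_
      · have hpt : ∀ i : Fin 10, (if i ∈ S then (-1:ℤ) else if i = t then -2 else 0)
            = (if i ∈ S then (-1:ℤ) else 0) + (if i = t then (-2:ℤ) else 0) := by
          intro i
          by_cases h2 : i ∈ S
          · have h1 : i ≠ t := fun h => htS (h ▸ h2)
            simp [h1, h2]
          · by_cases h1 : i = t
            · subst h1; simp [htS]
            · simp [h1, h2]
        rw [Finset.sum_congr rfl fun i _ => hpt i, Finset.sum_add_distrib,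
          Finset.sum_ite_mem, Finset.univ_inter, Finset.sum_const, Finset.sum_ite_eq']
        simp [hm]
      · have hpt : ∀ i : Fin 10,
            (if i ∈ S then (-1:ℤ) else if i = t then -2 else 0) *
            (if i ∈ S then (-1:ℤ) else if i = t then -2 else 0)
            = (if i ∈ S then (1:ℤ) else 0) + (if i = t then (4:ℤ) else 0) := by
          intro i
          by_cases h2 : i ∈ S
          · have h1 : i ≠ t := fun h => htS (h ▸ h2)
            simp [h1, h2]
          · by_cases h1 : i = t
            · subst h1; simp [htS]
            · simp [h1, h2]
        rw [Finset.sum_congr rfl fun i _ => hpt i, Finset.sum_add_distrib,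
          Finset.sum_ite_mem, Finset.univ_inter, Finset.sum_const, Finset.sum_ite_eq']
        simp [hm]
      · refine hpar _ (fun i hi => by simp [hi]) ?_
        intro i hi
        by_cases h1 : i = t
        · subst h1; simp [htS]
        · simp [h1, hi]
end

section
/- For every w ∈ E₉ and every t ∈ ℤ with ⟨w,w⟩ = 2t, the map ι_w : ℤ^{1,9} → ℤ^{1,9} defined by ι_w(v) = v + ⟨v,k₉⟩·w − (⟨w,v⟩ + t·⟨v,k₉⟩)·k₉ is a ℤ-linear bijection of ℤ^{1,9} that preserves the bilinear form (⟨ι_w(x), ι_w(y)⟩ = ⟨x,y⟩ for all x,y) and fixes k₉. Moreover ι is additive: if w, w' ∈ E₉ with ⟨w,w⟩ = 2t and ⟨w',w'⟩ = 2t', then ι_{w+w'} (formed with the integer t + t' + ⟨w,w'⟩, which satisfies ⟨w+w', w+w'⟩ = 2(t + t' + ⟨w,w'⟩)) equals the composition ι_w ∘ ι_{w'}. -/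
/-- The map `ι_w : v ↦ v + ⟨v,k₉⟩·w − (⟨w,v⟩ + t·⟨v,k₉⟩)·k₉` on `ℤ^{1,9}`. -/
def iota (w : Fin 10 → ℤ) (t : ℤ) (v : Fin 10 → ℤ) : Fin 10 → ℤ :=
  v + B v (kv 9) • w - (B w v + t * B v (kv 9)) • kv 9

lemma B_comm {n : ℕ} (x y : Fin (n+1) → ℤ) : B x y = B y x := by
  simp [B, mul_comm]
lemma B_add_left {n : ℕ} (x y z : Fin (n+1) → ℤ) : B (x + y) z = B x z + B y z := by
  simp [B, add_mul, Finset.sum_add_distrib]; ring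
lemma B_sub_left {n : ℕ} (x y z : Fin (n+1) → ℤ) : B (x - y) z = B x z - B y z := by
  simp [B, sub_mul, Finset.sum_sub_distrib]; ring
lemma B_smul_left {n : ℕ} (c : ℤ) (x z : Fin (n+1) → ℤ) : B (c • x) z = c * B x z := by
  simp only [B, Pi.smul_apply, smul_eq_mul, Finset.mul_sum]; ring_nf
  rw [Finset.mul_sum]; ring_nf
lemma B_add_right {n : ℕ} (x y z : Fin (n+1) → ℤ) : B z (x + y) = B z x + B z y := by
  rw [B_comm, B_add_left, B_comm x z, B_comm y z]
lemma B_sub_right {n : ℕ} (x y z : Fin (n+1) → ℤ) : B z (x - y) = B z x - B z y := by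
  rw [B_comm, B_sub_left, B_comm x z, B_comm y z]
lemma B_smul_right {n : ℕ} (c : ℤ) (x z : Fin (n+1) → ℤ) : B z (c • x) = c * B z x := by
  rw [B_comm, B_smul_left, B_comm x z]
lemma Bkk : B (kv 9) (kv 9) = 0 := by decide
lemma B_zero_left {n : ℕ} (z : Fin (n+1) → ℤ) : B 0 z = 0 := by simp [B]

lemma iota_Bk (w : Fin 10 → ℤ) (hw : B w (kv 9) = 0) (t : ℤ) (v : Fin 10 → ℤ) :
    B (iota w t v) (kv 9) = B v (kv 9) := by
  simp only [iota, B_add_left, B_sub_left, B_smul_left, hw, Bkk, mul_zero, add_zero, sub_zero]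

lemma iota_comp (w w' : Fin 10 → ℤ) (hw : B w (kv 9) = 0) (hw' : B w' (kv 9) = 0)
    (t t' : ℤ) (v : Fin 10 → ℤ) :
    iota (w + w') (t + t' + B w w') v = iota w t (iota w' t' v) := by
  have h1 : B (iota w' t' v) (kv 9) = B v (kv 9) := iota_Bk w' hw' t' v
  have h2 : B w (iota w' t' v) = B w v + B v (kv 9) * B w w' := by
    simp only [iota, B_add_right, B_sub_right, B_smul_right, B_comm (kv 9) w, hw, mul_zero,
      add_zero, sub_zero]
  conv_rhs => rw [iota]
  rw [h1, h2]
  unfold iota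
  rw [B_add_left w w' v]
  module

lemma iota_isom (w : Fin 10 → ℤ) (hw : B w (kv 9) = 0) (t : ℤ) (ht : B w w = 2 * t)
    (x y : Fin 10 → ℤ) : B (iota w t x) (iota w t y) = B x y := by
  simp only [iota, B_add_left, B_sub_left, B_add_right, B_sub_right, B_smul_left,
    B_smul_right, hw, Bkk, B_comm (kv 9) w, B_comm (kv 9) x, B_comm (kv 9) y,
    B_comm y x, B_comm y w, B_comm w x, ht, hw]
  ring

/-- for `w ∈ E₉` with `⟨w,w⟩ = 2t`, the map `ι_w` is a linear bijective
isometry of `ℤ^{1,9}` fixing `k₉`, and `ι` is additive in `w`. -/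
theorem iota_isometry_and_additive :
    (∀ w : Fin 10 → ℤ, B w (kv 9) = 0 → ∀ t : ℤ, B w w = 2 * t →
      Function.Bijective (iota w t) ∧
      (∀ x y : Fin 10 → ℤ, iota w t (x + y) = iota w t x + iota w t y) ∧
      (∀ (c : ℤ) (x : Fin 10 → ℤ), iota w t (c • x) = c • iota w t x) ∧
      (∀ x y : Fin 10 → ℤ, B (iota w t x) (iota w t y) = B x y) ∧
      iota w t (kv 9) = kv 9) ∧
    (∀ w w' : Fin 10 → ℤ, B w (kv 9) = 0 → B w' (kv 9) = 0 →
      ∀ t t' : ℤ, B w w = 2 * t → B w' w' = 2 * t' →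
      ∀ v : Fin 10 → ℤ,
        iota (w + w') (t + t' + B w w') v = iota w t (iota w' t' v)) := by
  constructor
  · intro w hw t ht
    refine ⟨?_, ?_, ?_, iota_isom w hw t ht, ?_⟩
    · -- bijective: inverse is iota (-w) t
      have hw' : B (-w) (kv 9) = 0 := by
        have := B_smul_left (-1 : ℤ) w (kv 9); simp at this; simp [this, hw]
      have key : ∀ v, iota w t (iota (-w) t v) = v := by
        intro v
        have := iota_comp w (-w) hw hw' t t v
        have hww' : B w (-w) = -(2*t) := by
          have := B_smul_left (-1 : ℤ) w w
          simp at this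
          rw [B_comm w (-w), this, ht]
        rw [hww'] at this
        simp only [add_neg_cancel, show t + t + -(2*t) = 0 by ring] at this
        rw [← this]
        simp [iota, B_zero_left]
      have key2 : ∀ v, iota (-w) t (iota w t v) = v := by
        intro v
        have := iota_comp (-w) w hw' hw t t v
        have hww' : B (-w) w = -(2*t) := by
          have := B_smul_left (-1 : ℤ) w w
          simp at this
          rw [this, ht]
        rw [hww'] at this
        simp only [neg_add_cancel, show t + t + -(2*t) = 0 by ring] at this
        rw [← this]
        simp [iota, B_zero_left]
      exact ⟨Function.LeftInverse.injective key2, Function.RightInverse.surjective key⟩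
    · intro x y
      unfold iota
      rw [B_add_left, B_add_right]
      module
    · intro c x
      simp only [iota, B_smul_left, B_smul_right]
      module
    · simp [iota, Bkk, B_comm (kv 9) w, hw]
  · intro w w' hw hw' t t' ht ht' v
    exact iota_comp w w' hw hw' t t' v
end

section
/- Let n ≥ 3 and let z ∈ ℤ^{1,n} satisfy ⟨z,z⟩ ≥ −1 and either ⟨z, e₀⟩ > 0 or z = e_i for some 1 ≤ i ≤ n. Then for every w ∈ W_n, either ⟨w(z), e₀⟩ > 0 or w(z) = e_j for some 1 ≤ j ≤ n. -/
set_option maxHeartbeats 1000000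

/-- The simple roots `α₀ = e₀ - e₁ - e₂ - e₃` and `αᵢ = eᵢ - e_{i+1}` (`1 ≤ i ≤ n-1`). -/
def alphaGen {n : ℕ} (i : Fin n) : Fin (n + 1) → ℤ :=
  if i.val = 0 then
    Pi.single 0 1 - Pi.single 1 1 - Pi.single 2 1 - Pi.single 3 1
  else
    Pi.single i.castSucc 1 - Pi.single i.succ 1

/-- The Coxeter group `W_n ⊆ GL(ℤ^{1,n})` generated by the reflections
`sᵢ : x ↦ x + ⟨x,αᵢ⟩·αᵢ`. -/
def Wgrp (n : ℕ) : Subgroup ((Fin (n + 1) → ℤ) ≃ₗ[ℤ] (Fin (n + 1) → ℤ)) :=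
  Subgroup.closure
    {g | ∃ i : Fin n, ∀ x : Fin (n + 1) → ℤ, g x = x + B x (alphaGen i) • alphaGen i}

namespace Wproof

variable {n : ℕ}

lemma val1 (hn : 3 ≤ n) : ((1 : Fin (n+1)) : ℕ) = 1 := by
  rw [Fin.coe_ofNat_eq_mod]; exact Nat.mod_eq_of_lt (by omega)

lemma val2 (hn : 3 ≤ n) : ((2 : Fin (n+1)) : ℕ) = 2 := by
  rw [Fin.coe_ofNat_eq_mod]; exact Nat.mod_eq_of_lt (by omega)

lemma val3 (hn : 3 ≤ n) : ((3 : Fin (n+1)) : ℕ) = 3 := by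
  rw [Fin.coe_ofNat_eq_mod]; exact Nat.mod_eq_of_lt (by omega)

lemma B_symm (x y : Fin (n+1) → ℤ) : B x y = B y x := by
  simp [B, mul_comm]

lemma B_add_left (x y w : Fin (n+1) → ℤ) : B (x + y) w = B x w + B y w := by
  simp [B, add_mul, Finset.sum_add_distrib]; ring

lemma B_smul_left (c : ℤ) (x w : Fin (n+1) → ℤ) : B (c • x) w = c * B x w := by
  simp only [B, Pi.smul_apply, smul_eq_mul, mul_sub, Finset.mul_sum]; ring_nf

lemma B_sub_right (x y w : Fin (n+1) → ℤ) : B x (y - w) = B x y - B x w := by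
  simp [B, mul_sub, Finset.sum_sub_distrib]; ring

lemma sum_single (z : Fin (n+1) → ℤ) (c : Fin (n+1)) (hc : c ≠ 0) :
    ∑ j : Fin n, z j.succ * ((Pi.single c 1 : Fin (n+1) → ℤ) j.succ) = z c := by
  obtain ⟨jc, rfl⟩ : ∃ jc : Fin n, jc.succ = c := ⟨c.pred hc, by simp⟩
  simp [Pi.single_apply, Fin.succ_inj, mul_ite]

lemma B_single (z : Fin (n+1) → ℤ) (c : Fin (n+1)) (hc : c ≠ 0) :
    B z (Pi.single c 1) = - z c := by
  rw [B, sum_single z c hc]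
  simp [Pi.single_apply, hc.symm]

lemma B_e0 (z : Fin (n+1) → ℤ) : B z (Pi.single 0 1) = z 0 := by
  simp [B, Pi.single_apply, Fin.succ_ne_zero]

lemma one_ne_zero' (hn : 3 ≤ n) : (1 : Fin (n+1)) ≠ 0 :=
  Fin.ne_of_val_ne (by rw [val1 hn]; simp)

lemma two_ne_zero' (hn : 3 ≤ n) : (2 : Fin (n+1)) ≠ 0 :=
  Fin.ne_of_val_ne (by rw [val2 hn]; simp)

lemma three_ne_zero' (hn : 3 ≤ n) : (3 : Fin (n+1)) ≠ 0 :=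
  Fin.ne_of_val_ne (by rw [val3 hn]; simp)

lemma B_alpha0 (hn : 3 ≤ n) (z : Fin (n+1) → ℤ) (i : Fin n) (hi : i.val = 0) :
    B z (alphaGen i) = z 0 + z 1 + z 2 + z 3 := by
  rw [alphaGen, if_pos hi, B_sub_right, B_sub_right, B_sub_right, B_e0,
    B_single z 1 (one_ne_zero' hn), B_single z 2 (two_ne_zero' hn),
    B_single z 3 (three_ne_zero' hn)]
  ring

lemma castSucc_ne_zero {i : Fin n} (hi : i.val ≠ 0) : (i.castSucc : Fin (n+1)) ≠ 0 :=
  Fin.ne_of_val_ne (by simpa using hi)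

lemma B_alphai (z : Fin (n+1) → ℤ) (i : Fin n) (hi : i.val ≠ 0) :
    B z (alphaGen i) = z i.succ - z i.castSucc := by
  rw [alphaGen, if_neg hi, B_sub_right, B_single z _ (castSucc_ne_zero hi),
    B_single z _ (Fin.succ_ne_zero i)]
  ring

lemma alpha0_apply_0 (hn : 3 ≤ n) (i : Fin n) (hi : i.val = 0) : alphaGen i 0 = 1 := by
  rw [alphaGen, if_pos hi]
  simp [Pi.single_apply, (one_ne_zero' hn).symm, (two_ne_zero' hn).symm,
    (three_ne_zero' hn).symm]

lemma alpha0_apply_1 (hn : 3 ≤ n) (i : Fin n) (hi : i.val = 0) : alphaGen i 1 = -1 := by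
  rw [alphaGen, if_pos hi]
  have h12 : (1 : Fin (n+1)) ≠ 2 := Fin.ne_of_val_ne (by rw [val1 hn, val2 hn]; omega)
  have h13 : (1 : Fin (n+1)) ≠ 3 := Fin.ne_of_val_ne (by rw [val1 hn, val3 hn]; omega)
  simp [Pi.single_apply, one_ne_zero' hn, h12, h13]

lemma alpha0_apply_2 (hn : 3 ≤ n) (i : Fin n) (hi : i.val = 0) : alphaGen i 2 = -1 := by
  rw [alphaGen, if_pos hi]
  have h21 : (2 : Fin (n+1)) ≠ 1 := Fin.ne_of_val_ne (by rw [val1 hn, val2 hn]; omega)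
  have h23 : (2 : Fin (n+1)) ≠ 3 := Fin.ne_of_val_ne (by rw [val2 hn, val3 hn]; omega)
  simp [Pi.single_apply, two_ne_zero' hn, h21, h23]

lemma alpha0_apply_3 (hn : 3 ≤ n) (i : Fin n) (hi : i.val = 0) : alphaGen i 3 = -1 := by
  rw [alphaGen, if_pos hi]
  have h31 : (3 : Fin (n+1)) ≠ 1 := Fin.ne_of_val_ne (by rw [val1 hn, val3 hn]; omega)
  have h32 : (3 : Fin (n+1)) ≠ 2 := Fin.ne_of_val_ne (by rw [val2 hn, val3 hn]; omega)
  simp [Pi.single_apply, three_ne_zero' hn, h31, h32]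

lemma alpha0_apply_big (hn : 3 ≤ n) (i : Fin n) (hi : i.val = 0)
    (k : Fin (n+1)) (hk : 3 < k.val) : alphaGen i k = 0 := by
  rw [alphaGen, if_pos hi]
  have h0 : k ≠ 0 := Fin.ne_of_val_ne (by rw [Fin.val_zero]; omega)
  have h1 : k ≠ 1 := Fin.ne_of_val_ne (by rw [val1 hn]; omega)
  have h2 : k ≠ 2 := Fin.ne_of_val_ne (by rw [val2 hn]; omega)
  have h3 : k ≠ 3 := Fin.ne_of_val_ne (by rw [val3 hn]; omega)
  simp [Pi.single_apply, h0, h1, h2, h3]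

lemma B_alpha_alpha (hn : 3 ≤ n) (i : Fin n) : B (alphaGen i) (alphaGen i) = -2 := by
  by_cases hi : i.val = 0
  · rw [B_alpha0 hn _ i hi, alpha0_apply_0 hn i hi, alpha0_apply_1 hn i hi,
      alpha0_apply_2 hn i hi, alpha0_apply_3 hn i hi]
    ring
  · have hcs : (i.castSucc : Fin (n+1)) ≠ i.succ :=
      Fin.ne_of_val_ne (by rw [Fin.coe_castSucc, Fin.val_succ]; omega)
    rw [B_alphai _ i hi, alphaGen, if_neg hi]
    simp [Pi.single_apply, hcs, hcs.symm]

lemma B_add_right (x y w : Fin (n+1) → ℤ) : B x (y + w) = B x y + B x w := by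
  rw [B_symm, B_add_left, B_symm y x, B_symm w x]

lemma B_smul_right (c : ℤ) (x w : Fin (n+1) → ℤ) : B x (c • w) = c * B x w := by
  rw [B_symm, B_smul_left, B_symm w x]

lemma refl_norm (hn : 3 ≤ n) (i : Fin n) (x : Fin (n+1) → ℤ) :
    B (x + B x (alphaGen i) • alphaGen i) (x + B x (alphaGen i) • alphaGen i) = B x x := by
  rw [B_add_left, B_smul_left, B_add_right, B_add_right, B_smul_right, B_smul_right,
    B_alpha_alpha hn i, B_symm (alphaGen i) x]
  ring

lemma refl_alpha (hn : 3 ≤ n) (i : Fin n) (x : Fin (n+1) → ℤ) :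
    B (x + B x (alphaGen i) • alphaGen i) (alphaGen i) = - B x (alphaGen i) := by
  rw [B_add_left, B_smul_left, B_alpha_alpha hn i]
  ring

def Pgood (n : ℕ) (z : Fin (n+1) → ℤ) : Prop :=
  -1 ≤ B z z ∧ (0 < z 0 ∨ ∃ j : Fin n, z = Pi.single j.succ 1)

lemma step (hn : 3 ≤ n) (i : Fin n) (z : Fin (n+1) → ℤ) (h : Pgood n z) :
    Pgood n (z + B z (alphaGen i) • alphaGen i) := by
  obtain ⟨hz, h0⟩ := h
  refine ⟨by rw [refl_norm hn i]; exact hz, ?_⟩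
  by_cases hi : i.val = 0
  · -- the reflection in α₀
    have ht : B z (alphaGen i) = z 0 + z 1 + z 2 + z 3 := B_alpha0 hn z i hi
    have happ0 : (z + B z (alphaGen i) • alphaGen i) 0 = z 0 + B z (alphaGen i) := by
      simp [alpha0_apply_0 hn i hi]
    rcases h0 with hd | ⟨j, rfl⟩
    · -- z 0 > 0
      by_cases hpos : 0 < z 0 + B z (alphaGen i)
      · left; rw [happ0]; exact hpos
      · -- the hard case
        push_neg at hpos
        rw [ht] at hpos
        -- sum manipulation setup
        obtain ⟨S, hSdef⟩ : ∃ S : ℤ, S = ∑ j : Fin n, z j.succ * z j.succ := ⟨_, rfl⟩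
        have hBzz : B z z = z 0 * z 0 - S := by rw [hSdef]; rfl
        have hS : S ≤ z 0 * z 0 + 1 := by rw [hBzz] at hz; linarith
        obtain ⟨j1, hj1⟩ : ∃ j : Fin n, j.succ = (1 : Fin (n+1)) :=
          ⟨⟨0, by omega⟩, Fin.ext (by rw [Fin.val_succ, val1 hn])⟩
        obtain ⟨j2, hj2⟩ : ∃ j : Fin n, j.succ = (2 : Fin (n+1)) :=
          ⟨⟨1, by omega⟩, Fin.ext (by rw [Fin.val_succ, val2 hn])⟩
        obtain ⟨j3, hj3⟩ : ∃ j : Fin n, j.succ = (3 : Fin (n+1)) :=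
          ⟨⟨2, by omega⟩, Fin.ext (by rw [Fin.val_succ, val3 hn])⟩
        have hv1 : j1.val = 0 := by
          have := congrArg Fin.val hj1; rw [Fin.val_succ, val1 hn] at this; omega
        have hv2 : j2.val = 1 := by
          have := congrArg Fin.val hj2; rw [Fin.val_succ, val2 hn] at this; omega
        have hv3 : j3.val = 2 := by
          have := congrArg Fin.val hj3; rw [Fin.val_succ, val3 hn] at this; omega
        have hne12 : j1 ≠ j2 := Fin.ne_of_val_ne (by omega)
        have hne13 : j1 ≠ j3 := Fin.ne_of_val_ne (by omega)
        have hne23 : j2 ≠ j3 := Fin.ne_of_val_ne (by omega)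
        have hsum3 : ∀ (s : Finset (Fin n)), ∑ j ∈ s, z j.succ * z j.succ ≤ S := by
          intro s
          rw [hSdef]
          exact Finset.sum_le_sum_of_subset_of_nonneg (Finset.subset_univ s)
            (fun j _ _ => mul_self_nonneg _)
        have h3sum : z 1 * z 1 + z 2 * z 2 + z 3 * z 3 ≤ S := by
          have h := hsum3 {j1, j2, j3}
          rw [Finset.sum_insert (by simp [hne12, hne13]),
            Finset.sum_insert (by simp [hne23]), Finset.sum_singleton, hj1, hj2, hj3] at h
          linarith
        have hkey : ∀ k : Fin n, 2 < k.val →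
            z 1 * z 1 + z 2 * z 2 + z 3 * z 3 + z k.succ * z k.succ ≤ S := by
          intro k hk
          have hnk1 : j1 ≠ k := Fin.ne_of_val_ne (by omega)
          have hnk2 : j2 ≠ k := Fin.ne_of_val_ne (by omega)
          have hnk3 : j3 ≠ k := Fin.ne_of_val_ne (by omega)
          have h := hsum3 {j1, j2, j3, k}
          rw [Finset.sum_insert (by simp [hne12, hne13, hnk1]),
            Finset.sum_insert (by simp [hne23, hnk2]),
            Finset.sum_insert (by simp [hnk3]), Finset.sum_singleton,
            hj1, hj2, hj3] at h
          linarith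
        -- degree must be 1
        have hdle : z 0 ≤ 1 := by
          have hprod : 0 ≤ (-(z 1 + z 2 + z 3) - 2 * z 0) * (2 * z 0 - (z 1 + z 2 + z 3)) :=
            mul_nonneg (by linarith) (by linarith)
          nlinarith [mul_self_nonneg (z 1 - z 2), mul_self_nonneg (z 1 - z 3),
            mul_self_nonneg (z 2 - z 3), mul_self_nonneg (z 0 - 2), h3sum, hS]
        have hd1 : z 0 = 1 := le_antisymm hdle hd
        have hsq : z 1 * z 1 + z 2 * z 2 + z 3 * z 3 ≤ 2 := by
          rw [hd1] at hS; linarith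
        have hsum2 : z 1 + z 2 + z 3 ≤ -2 := by rw [hd1] at hpos; linarith
        have habc : (z 1 = -1 ∧ z 2 = -1 ∧ z 3 = 0) ∨ (z 1 = -1 ∧ z 2 = 0 ∧ z 3 = -1) ∨
            (z 1 = 0 ∧ z 2 = -1 ∧ z 3 = -1) := by
          have hb1 : -1 ≤ z 1 ∧ z 1 ≤ 1 := by
            constructor <;> nlinarith [mul_self_nonneg (z 2), mul_self_nonneg (z 3)]
          have hb2 : -1 ≤ z 2 ∧ z 2 ≤ 1 := by
            constructor <;> nlinarith [mul_self_nonneg (z 1), mul_self_nonneg (z 3)]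
          have hb3 : -1 ≤ z 3 ∧ z 3 ≤ 1 := by
            constructor <;> nlinarith [mul_self_nonneg (z 1), mul_self_nonneg (z 2)]
          obtain ⟨hb1l, hb1r⟩ := hb1; obtain ⟨hb2l, hb2r⟩ := hb2; obtain ⟨hb3l, hb3r⟩ := hb3
          set a := z 1; set b := z 2; set c := z 3
          interval_cases a <;> interval_cases b <;> interval_cases c <;> omega
        have hq2 : z 1 * z 1 + z 2 * z 2 + z 3 * z 3 = 2 := by
          rcases habc with ⟨h1, h2, h3⟩ | ⟨h1, h2, h3⟩ | ⟨h1, h2, h3⟩ <;>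
            rw [h1, h2, h3] <;> ring
        have ht1 : B z (alphaGen i) = -1 := by
          rw [ht, hd1]
          rcases habc with ⟨h1, h2, h3⟩ | ⟨h1, h2, h3⟩ | ⟨h1, h2, h3⟩ <;>
            rw [h1, h2, h3] <;> ring
        have hrest : ∀ k : Fin (n+1), 3 < k.val → z k = 0 := by
          intro k hk
          obtain ⟨k', hks⟩ : ∃ k' : Fin n, k'.succ = k :=
            ⟨⟨k.val - 1, by omega⟩, Fin.ext (show k.val - 1 + 1 = k.val by omega)⟩
          have hkv : 2 < k'.val := by
            have := congrArg Fin.val hks; rw [Fin.val_succ] at this; omega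
          have h := hkey k' hkv
          rw [hks, hq2] at h
          have hS2 : S ≤ 2 := by rw [hd1] at hS; linarith
          have h' : z k * z k ≤ 0 := by linarith
          exact mul_self_eq_zero.mp (le_antisymm h' (mul_self_nonneg _))
        -- build the exceptional vector
        have hfin : ∀ (m : Fin n), m.succ.val ≤ 3 →
            (∀ k : Fin (n+1), k.val ≤ 3 →
              z k + B z (alphaGen i) * alphaGen i k = (Pi.single m.succ 1 : Fin (n+1) → ℤ) k) →
            z + B z (alphaGen i) • alphaGen i = Pi.single m.succ 1 := by
          intro m hm hvals
          funext k
          rcases le_or_gt k.val 3 with hk | hk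
          · simpa using hvals k hk
          · have e1 : z k = 0 := hrest k hk
            have e2 : alphaGen i k = 0 := alpha0_apply_big hn i hi k hk
            have e3 : (Pi.single m.succ 1 : Fin (n+1) → ℤ) k = 0 := by
              rw [Pi.single_apply, if_neg (Fin.ne_of_val_ne (by omega))]
            simp [e1, e2, e3]
        have hcase : ∀ k : Fin (n+1), k.val ≤ 3 → k = 0 ∨ k = 1 ∨ k = 2 ∨ k = 3 := by
          intro k hk
          have hv : k.val = 0 ∨ k.val = 1 ∨ k.val = 2 ∨ k.val = 3 := by omega
          rcases hv with h | h | h | h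
          · exact Or.inl (Fin.ext (by rw [Fin.val_zero]; exact h))
          · exact Or.inr (Or.inl (Fin.ext (by rw [val1 hn]; exact h)))
          · exact Or.inr (Or.inr (Or.inl (Fin.ext (by rw [val2 hn]; exact h))))
          · exact Or.inr (Or.inr (Or.inr (Fin.ext (by rw [val3 hn]; exact h))))
        have h01 : (0 : Fin (n+1)) ≠ 1 := (one_ne_zero' hn).symm
        have h02 : (0 : Fin (n+1)) ≠ 2 := (two_ne_zero' hn).symm
        have h03 : (0 : Fin (n+1)) ≠ 3 := (three_ne_zero' hn).symm
        have h12 : (1 : Fin (n+1)) ≠ 2 := Fin.ne_of_val_ne (by rw [val1 hn, val2 hn]; omega)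
        have h13 : (1 : Fin (n+1)) ≠ 3 := Fin.ne_of_val_ne (by rw [val1 hn, val3 hn]; omega)
        have h23 : (2 : Fin (n+1)) ≠ 3 := Fin.ne_of_val_ne (by rw [val2 hn, val3 hn]; omega)
        right
        rcases habc with ⟨ha, hb, hc⟩ | ⟨ha, hb, hc⟩ | ⟨ha, hb, hc⟩
        · -- z = e₀ - e₁ - e₂ : image is e₃
          refine ⟨j3, hfin j3 (by rw [Fin.val_succ]; omega) ?_⟩
          intro k hk
          rw [hj3]
          rcases hcase k hk with rfl | rfl | rfl | rfl
          · rw [alpha0_apply_0 hn i hi, ht1, hd1, Pi.single_apply, if_neg h03]; ring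
          · rw [alpha0_apply_1 hn i hi, ht1, ha, Pi.single_apply, if_neg h13]; ring
          · rw [alpha0_apply_2 hn i hi, ht1, hb, Pi.single_apply, if_neg h23]; ring
          · rw [alpha0_apply_3 hn i hi, ht1, hc, Pi.single_apply, if_pos rfl]; ring
        · -- z = e₀ - e₁ - e₃ : image is e₂
          refine ⟨j2, hfin j2 (by rw [Fin.val_succ]; omega) ?_⟩
          intro k hk
          rw [hj2]
          rcases hcase k hk with rfl | rfl | rfl | rfl
          · rw [alpha0_apply_0 hn i hi, ht1, hd1, Pi.single_apply, if_neg h02]; ring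
          · rw [alpha0_apply_1 hn i hi, ht1, ha, Pi.single_apply, if_neg h12]; ring
          · rw [alpha0_apply_2 hn i hi, ht1, hb, Pi.single_apply, if_pos rfl]; ring
          · rw [alpha0_apply_3 hn i hi, ht1, hc, Pi.single_apply, if_neg h23.symm]; ring
        · -- z = e₀ - e₂ - e₃ : image is e₁
          refine ⟨j1, hfin j1 (by rw [Fin.val_succ]; omega) ?_⟩
          intro k hk
          rw [hj1]
          rcases hcase k hk with rfl | rfl | rfl | rfl
          · rw [alpha0_apply_0 hn i hi, ht1, hd1, Pi.single_apply, if_neg h01]; ring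
          · rw [alpha0_apply_1 hn i hi, ht1, ha, Pi.single_apply, if_pos rfl]; ring
          · rw [alpha0_apply_2 hn i hi, ht1, hb, Pi.single_apply, if_neg h12.symm]; ring
          · rw [alpha0_apply_3 hn i hi, ht1, hc, Pi.single_apply, if_neg h13.symm]; ring
    · -- z = e_{j.succ}
      have hz0' : (Pi.single j.succ 1 : Fin (n+1) → ℤ) 0 = 0 := by
        rw [Pi.single_apply, if_neg (Fin.succ_ne_zero j).symm]
      have hnn : ∀ k : Fin (n+1), 0 ≤ (Pi.single j.succ 1 : Fin (n+1) → ℤ) k := by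
        intro k; rw [Pi.single_apply]; split <;> norm_num
      have htnn : 0 ≤ B (Pi.single j.succ 1 : Fin (n+1) → ℤ) (alphaGen i) := by
        rw [ht, hz0']
        have := hnn 1; have := hnn 2; have := hnn 3; linarith
      rcases eq_or_lt_of_le htnn with hteq | htpos
      · right; exact ⟨j, by rw [← hteq]; simp⟩
      · left; rw [happ0, hz0']; simpa using htpos
  · -- the reflection in αᵢ, i ≥ 1
    have hcs0 : (i.castSucc : Fin (n+1)) ≠ 0 := castSucc_ne_zero hi
    have happ0 : (z + B z (alphaGen i) • alphaGen i) 0 = z 0 := by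
      have hα0 : alphaGen i 0 = 0 := by
        rw [alphaGen, if_neg hi]
        simp [Pi.single_apply, Ne.symm hcs0, (Fin.succ_ne_zero i).symm]
      simp [hα0]
    rcases h0 with hd | ⟨j, rfl⟩
    · left; rw [happ0]; exact hd
    · right
      have ht : B (Pi.single j.succ 1 : Fin (n+1) → ℤ) (alphaGen i) =
          (Pi.single j.succ 1 : Fin (n+1) → ℤ) i.succ -
          (Pi.single j.succ 1 : Fin (n+1) → ℤ) i.castSucc := B_alphai _ i hi
      by_cases hji : j = i
      · subst hji
        have hne : (j.castSucc : Fin (n+1)) ≠ j.succ :=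
          Fin.ne_of_val_ne (by rw [Fin.coe_castSucc, Fin.val_succ]; omega)
        have ht1 : B (Pi.single j.succ 1 : Fin (n+1) → ℤ) (alphaGen j) = 1 := by
          rw [ht, Pi.single_apply, Pi.single_apply, if_pos rfl, if_neg hne]; ring
        obtain ⟨m, hm⟩ : ∃ m : Fin n, m.succ = j.castSucc :=
          ⟨⟨j.val - 1, by have := j.isLt; omega⟩,
            Fin.ext (show j.val - 1 + 1 = j.val by omega)⟩
        refine ⟨m, ?_⟩
        rw [ht1, hm, alphaGen, if_neg hi, one_smul]
        abel
      · by_cases hjc : j.succ = i.castSucc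
        · have hnes : (i.succ : Fin (n+1)) ≠ j.succ := fun h => hji (Fin.succ_inj.mp h).symm
          have ht1 : B (Pi.single j.succ 1 : Fin (n+1) → ℤ) (alphaGen i) = -1 := by
            rw [ht, Pi.single_apply, Pi.single_apply, if_neg hnes, if_pos hjc.symm]; ring
          refine ⟨i, ?_⟩
          rw [ht1, alphaGen, if_neg hi, ← hjc, neg_smul, one_smul]
          abel
        · have ht0 : B (Pi.single j.succ 1 : Fin (n+1) → ℤ) (alphaGen i) = 0 := by
            have hnes : (i.succ : Fin (n+1)) ≠ j.succ := fun h => hji (Fin.succ_inj.mp h).symm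
            rw [ht, Pi.single_apply, Pi.single_apply, if_neg hnes, if_neg (Ne.symm hjc)]; ring
          exact ⟨j, by rw [ht0]; simp⟩

lemma gen_apply_apply (hn : 3 ≤ n) (g : (Fin (n+1) → ℤ) ≃ₗ[ℤ] (Fin (n+1) → ℤ)) (i : Fin n)
    (hg : ∀ x : Fin (n+1) → ℤ, g x = x + B x (alphaGen i) • alphaGen i)
    (x : Fin (n+1) → ℤ) : g (g x) = x := by
  rw [hg (g x), hg x, refl_alpha hn i x, neg_smul]
  abel

lemma gen_invol (hn : 3 ≤ n) (g : (Fin (n+1) → ℤ) ≃ₗ[ℤ] (Fin (n+1) → ℤ)) (i : Fin n)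
    (hg : ∀ x : Fin (n+1) → ℤ, g x = x + B x (alphaGen i) • alphaGen i) :
    g⁻¹ = g := by
  have hmul : g * g = 1 := by
    apply LinearEquiv.toLinearMap_injective
    apply LinearMap.ext
    intro x
    show g (g x) = x
    exact gen_apply_apply hn g i hg x
  exact inv_eq_of_mul_eq_one_right hmul

end Wproof

open Wproof

/-- if `⟨z,z⟩ ≥ -1` and (`⟨z,e₀⟩ > 0` or `z = eᵢ` for some `i ≥ 1`), then
for every `w ∈ W_n`, either `⟨w(z),e₀⟩ > 0` or `w(z) = eⱼ` for some `j ≥ 1`. -/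
theorem W_preserves_positivity (n : ℕ) (hn : 3 ≤ n) (z : Fin (n + 1) → ℤ)
    (hz : -1 ≤ B z z)
    (hz0 : 0 < B z (Pi.single 0 1) ∨ ∃ i : Fin n, z = Pi.single i.succ 1)
    (w : (Fin (n + 1) → ℤ) ≃ₗ[ℤ] (Fin (n + 1) → ℤ)) (hw : w ∈ Wgrp n) :
    0 < B (w z) (Pi.single 0 1) ∨ ∃ j : Fin n, w z = Pi.single j.succ 1 := by
  have hP : Pgood n z := ⟨hz, by rwa [B_e0] at hz0⟩
  have hw' : w ∈ Subgroup.closure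
      {g : (Fin (n+1) → ℤ) ≃ₗ[ℤ] (Fin (n+1) → ℤ) |
        ∃ i : Fin n, ∀ x : Fin (n+1) → ℤ, g x = x + B x (alphaGen i) • alphaGen i} := hw
  have main : (∀ x, Pgood n x → Pgood n (w x)) ∧ (∀ x, Pgood n x → Pgood n (w⁻¹ x)) := by
    refine Subgroup.closure_induction ?_ ?_ ?_ ?_ hw'
    · rintro g ⟨i, hg⟩
      have h1 : ∀ x, Pgood n x → Pgood n (g x) := fun x hx => by
        rw [hg x]; exact step hn i x hx
      exact ⟨h1, by rw [gen_invol hn g i hg]; exact h1⟩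
    · exact ⟨fun x hx => hx, fun x hx => by rw [inv_one]; exact hx⟩
    · rintro a b _ _ ⟨ha1, ha2⟩ ⟨hb1, hb2⟩
      refine ⟨fun x hx => ?_, fun x hx => ?_⟩
      · exact ha1 _ (hb1 x hx)
      · rw [mul_inv_rev]; exact hb2 _ (ha2 x hx)
    · rintro a _ ⟨h1, h2⟩
      exact ⟨h2, by rw [inv_inv]; exact h1⟩
  obtain ⟨h1, h2⟩ := (main.1 z hP)
  rcases h2 with hpos | hex
  · left; rwa [B_e0]
  · right; exact hex
end

section
/- Let n ≥ 3 and let r ∈ ℤ^{1,n} satisfy ⟨r, k_n⟩ = 0, ⟨r,r⟩ = −2, and |⟨r, e₀⟩| ≤ 1. Then either r = e_i − e_j for some indices 1 ≤ i, j ≤ n with i ≠ j, or r = ε·(e₀ − e_i − e_j − e_k) for some ε ∈ {1, −1} and pairwise distinct indices 1 ≤ i, j, k ≤ n. -/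
/-- Helper: identify a vector of the form `ε • (e₀ - eᵢ - eⱼ - e_k)` coordinatewise. -/
lemma aux_triple {n : ℕ} (r : Fin (n + 1) → ℤ) (ε : ℤ) (i j k : Fin n)
    (hij : i ≠ j) (hik : i ≠ k) (hjk : j ≠ k) (h0 : r 0 = ε) (hs : ∀ m : Fin n, r m.succ = if m = i ∨ m = j ∨ m = k then -ε else 0) :
    r = ε • (Pi.single (0 : Fin (n+1)) 1 - Pi.single i.succ 1 - Pi.single j.succ 1
      - Pi.single k.succ 1) := by
  funext t
  refine Fin.cases ?_ (fun m => ?_) t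
  · simp [Pi.single_apply, (Fin.succ_ne_zero i).symm, (Fin.succ_ne_zero j).symm,
      (Fin.succ_ne_zero k).symm, h0]
  · have := hs m
    simp only [Pi.smul_apply, Pi.sub_apply, Pi.single_apply, Fin.succ_ne_zero,
      if_neg (Fin.succ_ne_zero m), Fin.succ_inj, smul_eq_mul]
    by_cases hi : m = i <;> by_cases hj : m = j <;> by_cases hk : m = k <;>
      simp_all <;> ring

/-- a root `r ∈ E_n` with `|⟨r,e₀⟩| ≤ 1` is of the form `eᵢ - eⱼ`
or `±(e₀ - eᵢ - eⱼ - e_k)`. -/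
theorem root_classification (n : ℕ) (hn : 3 ≤ n) (r : Fin (n + 1) → ℤ)
    (h1 : B r (kv n) = 0) (h2 : B r r = -2)
    (h3 : |B r (Pi.single 0 1)| ≤ 1) :
    (∃ i j : Fin n, i ≠ j ∧ r = Pi.single i.succ 1 - Pi.single j.succ 1) ∨
    (∃ ε : ℤ, (ε = 1 ∨ ε = -1) ∧ ∃ i j k : Fin n, i ≠ j ∧ i ≠ k ∧ j ≠ k ∧
      r = ε • (Pi.single 0 1 - Pi.single i.succ 1 - Pi.single j.succ 1
        - Pi.single k.succ 1)) := by
  classical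
  set a := r 0 with ha
  set x : Fin n → ℤ := fun i => r i.succ with hxdef
  have hsum : ∑ i, x i = -3 * a := by
    have e1 : B r (kv n) = a * (-3) - ∑ i : Fin n, x i := by
      simp [B, kv, Fin.succ_ne_zero, hxdef, ha]
    rw [e1] at h1; linarith
  have hsq : ∑ i, x i ^ 2 = a ^ 2 + 2 := by
    have e2 : B r r = a * a - ∑ i : Fin n, x i * x i := rfl
    rw [e2] at h2
    have : ∑ i, x i ^ 2 = ∑ i, x i * x i := by
      apply Finset.sum_congr rfl; intro i _; ring
    rw [this]; nlinarith
  have haval : a = 0 ∨ a = 1 ∨ a = -1 := by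
    have e3 : B r (Pi.single 0 1) = a := by
      simp [B, Pi.single_apply, Fin.succ_ne_zero, ha]
    rw [e3] at h3
    rcases abs_le.mp h3 with ⟨hl, hr⟩
    omega
  have hxi : ∀ i, x i = 1 ∨ x i = 0 ∨ x i = -1 := by
    intro i
    have hle : x i ^ 2 ≤ ∑ j, x j ^ 2 :=
      Finset.single_le_sum (fun j _ => sq_nonneg (x j)) (Finset.mem_univ i)
    have h3' : x i ^ 2 ≤ 3 := by rcases haval with h | h | h <;> rw [h] at hsq <;> omega
    have hb : -2 < x i ∧ x i < 2 := by constructor <;> nlinarith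
    omega
  set P := Finset.univ.filter (fun i => x i = 1) with hP
  set N := Finset.univ.filter (fun i => x i = -1) with hN
  have hmemP : ∀ i, i ∈ P ↔ x i = 1 := by intro i; simp [hP]
  have hmemN : ∀ i, i ∈ N ↔ x i = -1 := by intro i; simp [hN]
  have hcard_sum : ∑ i, x i = (P.card : ℤ) - N.card := by
    rw [hP, hN, Finset.card_filter, Finset.card_filter]
    push_cast
    rw [← Finset.sum_sub_distrib]
    apply Finset.sum_congr rfl
    intro i _
    rcases hxi i with h | h | h <;> simp [h]
  have hcard_sq : ∑ i, x i ^ 2 = (P.card : ℤ) + N.card := by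
    rw [hP, hN, Finset.card_filter, Finset.card_filter]
    push_cast
    rw [← Finset.sum_add_distrib]
    apply Finset.sum_congr rfl
    intro i _
    rcases hxi i with h | h | h <;> norm_num [h]
  rcases haval with h0 | h0 | h0
  · -- a = 0 : P.card = N.card = 1
    rw [h0] at hsum hsq
    have hPc : P.card = 1 ∧ N.card = 1 := by
      rw [hcard_sum] at hsum; rw [hcard_sq] at hsq; omega
    obtain ⟨i, hi⟩ := Finset.card_eq_one.mp hPc.1
    obtain ⟨j, hj⟩ := Finset.card_eq_one.mp hPc.2
    have hxi1 : x i = 1 := (hmemP i).mp (by rw [hi]; exact Finset.mem_singleton_self i)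
    have hxj1 : x j = -1 := (hmemN j).mp (by rw [hj]; exact Finset.mem_singleton_self j)
    have hij : i ≠ j := by intro h; rw [h, hxj1] at hxi1; omega
    left
    refine ⟨i, j, hij, ?_⟩
    funext t
    refine Fin.cases ?_ (fun m => ?_) t
    · simp [Pi.single_apply, (Fin.succ_ne_zero i).symm, (Fin.succ_ne_zero j).symm, ← ha, h0]
    · have hrm : r m.succ = x m := rfl
      simp only [Pi.sub_apply, Pi.single_apply, Fin.succ_inj, hrm]
      by_cases hmi : m = i
      · subst hmi
        rw [if_pos rfl, if_neg hij, hxi1]; ring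
      · by_cases hmj : m = j
        · subst hmj
          rw [if_neg hmi, if_pos rfl, hxj1]; ring
        · have h1' : x m ≠ 1 := by
            intro h; exact hmi (Finset.mem_singleton.mp (hi ▸ (hmemP m).mpr h))
          have h2' : x m ≠ -1 := by
            intro h; exact hmj (Finset.mem_singleton.mp (hj ▸ (hmemN m).mpr h))
          have : x m = 0 := by rcases hxi m with h | h | h <;> omega
          rw [if_neg hmi, if_neg hmj, this]; ring
  · -- a = 1 : N.card = 3, P empty; r = e0 - ei - ej - ek
    rw [h0] at hsum hsq
    have hc : P.card = 0 ∧ N.card = 3 := by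
      rw [hcard_sum] at hsum; rw [hcard_sq] at hsq; omega
    obtain ⟨i, j, k, hij, hik, hjk, hNeq⟩ := Finset.card_eq_three.mp hc.2
    right
    refine ⟨1, Or.inl rfl, i, j, k, hij, hik, hjk, ?_⟩
    apply aux_triple r 1 i j k hij hik hjk (by rw [← ha, h0])
    intro m
    have hPm : x m ≠ 1 := by
      intro h
      have := (hmemP m).mpr h
      rw [Finset.card_eq_zero.mp hc.1] at this
      exact absurd this (Finset.notMem_empty m)
    by_cases hm : m = i ∨ m = j ∨ m = k
    · have : m ∈ N := by rw [hNeq]; simp [hm]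
      rw [if_pos hm]
      have := (hmemN m).mp this
      simpa using this
    · have hNm : x m ≠ -1 := by
        intro h
        have := (hmemN m).mpr h
        rw [hNeq] at this
        simp only [Finset.mem_insert, Finset.mem_singleton] at this
        exact hm this
      have : x m = 0 := by rcases hxi m with h | h | h <;> omega
      rw [if_neg hm]; exact this
  · -- a = -1 : P.card = 3, N empty; r = -(e0 - ei - ej - ek)
    rw [h0] at hsum hsq
    have hc : P.card = 3 ∧ N.card = 0 := by
      rw [hcard_sum] at hsum; rw [hcard_sq] at hsq; omega
    obtain ⟨i, j, k, hij, hik, hjk, hPeq⟩ := Finset.card_eq_three.mp hc.1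
    right
    refine ⟨-1, Or.inr rfl, i, j, k, hij, hik, hjk, ?_⟩
    apply aux_triple r (-1) i j k hij hik hjk (by rw [← ha, h0])
    intro m
    have hNm : x m ≠ -1 := by
      intro h
      have := (hmemN m).mpr h
      rw [Finset.card_eq_zero.mp hc.2] at this
      exact absurd this (Finset.notMem_empty m)
    by_cases hm : m = i ∨ m = j ∨ m = k
    · have : m ∈ P := by rw [hPeq]; simp [hm]
      rw [if_pos hm]
      have := (hmemP m).mp this
      simpa using this
    · have hPm : x m ≠ 1 := by
        intro h
        have := (hmemP m).mpr h
        rw [hPeq] at this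
        simp only [Finset.mem_insert, Finset.mem_singleton] at this
        exact hm this
      have : x m = 0 := by rcases hxi m with h | h | h <;> omega
      rw [if_neg hm]; exact this
end
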